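/- Let ε ∈ {1, -1}. The invertible 2×2 complex matrices F = [[a, b], [c, d]] satisfying ε·[[a, -b], [-c, d]] = F² are exactly: F = ε·I (the identity times ε), or F = [[-ε/2, t], [-3/(4t), -ε/2]] for some nonzero t ∈ ℂ. -/

import Mathlib

theorem stmt_16 (ε : ℂ) (hε : ε = 1 ∨ ε = -1)
    (F : Matrix (Fin 2) (Fin 2) ℂ) (hF : IsUnit F) :
    (ε • (!![F 0 0, -(F 0 1); -(F 1 0), F 1 1] : Matrix (Fin 2) (Fin 2) ℂ) = F * F)
    ↔ (F = ε • (1 : Matrix (Fin 2) (Fin 2) ℂ)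
        ∨ ∃ t : ℂ, t ≠ 0 ∧ F = !![-ε / 2, t; -3 / (4 * t), -ε / 2]) := by
  have hε2 : ε * ε = 1 := by rcases hε with h | h <;> rw [h] <;> ring
  have hεne : ε ≠ 0 := by rcases hε with h | h <;> rw [h] <;> norm_num
  have hone : ε • (1 : Matrix (Fin 2) (Fin 2) ℂ) = !![ε, 0; 0, ε] := by
    ext i j
    fin_cases i <;> fin_cases j <;> simp [Matrix.one_apply]
  set a := F 0 0 with ha
  set b := F 0 1 with hb
  set c := F 1 0 with hc
  set d := F 1 1 with hd
  have hFe : F = !![a, b; c, d] := by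
    rw [Matrix.eta_fin_two F]
  have hdet : a * d - b * c ≠ 0 := by
    have h1 := (Matrix.isUnit_iff_isUnit_det F).1 hF
    rw [hFe, Matrix.det_fin_two_of] at h1
    exact h1.ne_zero
  rw [hFe, hone, Matrix.smul_of, Matrix.mul_fin_two]
  constructor
  · intro h
    have e00 : ε * a = a * a + b * c := congrFun (congrFun h 0) 0
    have e01 : ε * -b = a * b + b * d := congrFun (congrFun h 0) 1
    have e10 : ε * -c = c * a + d * c := congrFun (congrFun h 1) 0
    have e11 : ε * d = c * b + d * d := congrFun (congrFun h 1) 1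
    by_cases hb0 : b = 0
    · by_cases hc0 : c = 0
      · left
        have hane : a ≠ 0 := fun h0 => hdet (by rw [h0, hb0, hc0]; ring)
        have hdne : d ≠ 0 := fun h0 => hdet (by rw [h0, hb0, hc0]; ring)
        have haε : a = ε := by
          have : a * a = a * ε := by linear_combination -e00 - hc0 * b
          exact mul_left_cancel₀ hane this
        have hdε : d = ε := by
          have : d * d = d * ε := by linear_combination -e11 - hc0 * b
          exact mul_left_cancel₀ hdne this
        rw [haε, hdε, hb0, hc0]
      · exfalso
        have hane : a ≠ 0 := fun h0 => hdet (by rw [h0, hb0]; ring)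
        have hdne : d ≠ 0 := fun h0 => hdet (by rw [h0, hb0]; ring)
        have haε : a = ε := by
          have : a * a = a * ε := by linear_combination -e00 - hb0 * c
          exact mul_left_cancel₀ hane this
        have hdε : d = ε := by
          have : d * d = d * ε := by linear_combination -e11 - hb0 * c
          exact mul_left_cancel₀ hdne this
        have hsum : c * (a + d + ε) = 0 := by linear_combination -e10
        rcases mul_eq_zero.1 hsum with h0 | h0
        · exact hc0 h0
        · rw [haε, hdε] at h0
          have : ε = 0 := by linear_combination h0 / 3
          exact hεne this
    · right
      have hsum : a + d = -ε := by
        have hsum' : b * (a + d + ε) = 0 := by linear_combination -e01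
        rcases mul_eq_zero.1 hsum' with h0 | h0
        · exact absurd h0 hb0
        · linear_combination h0
      have had : a = d := by
        have h2 : (2 * ε) * (a - d) = 0 := by
          linear_combination e00 - e11 + (a - d) * hsum
        rcases mul_eq_zero.1 h2 with h0 | h0
        · exact absurd (by linear_combination h0 / 2) hεne
        · linear_combination h0
      have haval : a = -ε / 2 := by linear_combination (hsum - had) / 2 + had
      have hbc : b * c = -3 / 4 := by
        linear_combination -e00 + (3 * ε / 2 - a) * haval - (3 / 4) * hε2
      refine ⟨b, hb0, ?_⟩
      have hcval : c = -3 / (4 * b) := by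
        field_simp
        linear_combination 4 * hbc
      rw [haval, hcval, had.symm, haval]
  · intro h
    rcases h with h | ⟨t, ht, h⟩
    · have h00 : a = ε := congrFun (congrFun h 0) 0
      have h01 : b = 0 := congrFun (congrFun h 0) 1
      have h10 : c = 0 := congrFun (congrFun h 1) 0
      have h11 : d = ε := congrFun (congrFun h 1) 1
      rw [h00, h01, h10, h11]
      ext i j
      fin_cases i <;> fin_cases j <;> simp
    · have h00 : a = -ε / 2 := congrFun (congrFun h 0) 0
      have h01 : b = t := congrFun (congrFun h 0) 1
      have h10 : c = -3 / (4 * t) := congrFun (congrFun h 1) 0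
      have h11 : d = -ε / 2 := congrFun (congrFun h 1) 1
      rw [h00, h01, h10, h11]
      ext i j
      fin_cases i <;> fin_cases j <;> simp <;> field_simp <;>
        (rcases hε with h' | h' <;> subst h' <;> ring)
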